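/- The sequence u_n / v_n converges to √(k/h) as n → ∞. -/

import Mathlib

open Filter Real

theorem stmt7 (h k : ℕ) (hh : 1 ≤ h) (hk : 1 ≤ k) (u v : ℕ → ℕ)
    (hu0 : u 0 = 1) (hv0 : v 0 = 0)
    (hu : ∀ n, u (n + 1) = u n + k * v n)
    (hv : ∀ n, v (n + 1) = h * u n + v n) :
    Filter.Tendsto (fun n => (u n : ℝ) / (v n : ℝ)) Filter.atTop
      (nhds (Real.sqrt ((k : ℝ) / (h : ℝ)))) := by
  have hh' : (1:ℝ) ≤ h := by exact_mod_cast hh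
  have hk' : (1:ℝ) ≤ k := by exact_mod_cast hk
  have hhk : (1:ℝ) ≤ (h:ℝ) * k := by nlinarith
  set s : ℝ := Real.sqrt ((h:ℝ) * k) with hsdef
  have hs0 : 0 ≤ s := Real.sqrt_nonneg _
  have hs2 : s ^ 2 = (h:ℝ) * k := Real.sq_sqrt (by positivity)
  -- Key algebraic identity
  have L1 : ∀ n, (h:ℝ) * (u n) ^ 2 - k * (v n) ^ 2 = (1 - (h:ℝ) * k) ^ n * h := by
    intro n
    induction n with
    | zero => simp [hu0, hv0]
    | succ n ih =>
      rw [hu n, hv n]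
      push_cast
      linear_combination (1 - (h:ℝ) * k) * ih
  -- positivity facts
  have hu1 : ∀ n, 1 ≤ u n := by
    intro n
    induction n with
    | zero => omega
    | succ n ih => rw [hu n]; omega
  have hvmono : ∀ n, v n ≤ v (n+1) := by
    intro n; rw [hv n]; exact Nat.le_add_left _ _
  have hv1 : ∀ n, 1 ≤ v (n+1) := by
    intro n
    induction n with
    | zero =>
      rw [hv 0, hu0, hv0]
      nlinarith [hh, hk]
    | succ n ih => exact le_trans ih (hvmono (n+1))
  -- u (n+1) ≤ (k+1) * v (n+1)
  have L3 : ∀ n, u (n+1) ≤ (k+1) * v (n+1) := by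
    intro n
    rw [hu n, hv n]
    have hx : u n ≤ h * u n + v n :=
      le_trans (Nat.le_mul_of_pos_left (u n) hh) (Nat.le_add_right _ _)
    have hy : k * v n ≤ k * (h * u n + v n) :=
      Nat.mul_le_mul_left k (Nat.le_add_left _ _)
    calc u n + k * v n ≤ (h * u n + v n) + k * (h * u n + v n) := Nat.add_le_add hx hy
      _ = (k + 1) * (h * u n + v n) := by ring
  -- growth of u*v
  have L4 : ∀ n, (1+s)^2 * ((u n : ℝ) * v n) ≤ (u (n+1) : ℝ) * v (n+1) := by
    intro n
    have h1 : (Real.sqrt h) ^ 2 = (h:ℝ) := Real.sq_sqrt (by positivity)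
    have h2 : (Real.sqrt k) ^ 2 = (k:ℝ) := Real.sq_sqrt (by positivity)
    have h3 : s = Real.sqrt h * Real.sqrt k := by
      rw [hsdef, Real.sqrt_mul (by positivity)]
    have hun : (0:ℝ) ≤ u n := Nat.cast_nonneg _
    have hvn : (0:ℝ) ≤ v n := Nat.cast_nonneg _
    have am : 2 * s * ((u n : ℝ) * v n) ≤ h * (u n : ℝ)^2 + k * (v n : ℝ)^2 := by
      have hsq := sq_nonneg (Real.sqrt h * (u n:ℝ) - Real.sqrt k * (v n:ℝ))
      have e : (Real.sqrt h * (u n:ℝ) - Real.sqrt k * (v n:ℝ))^2 =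
          h * (u n : ℝ)^2 + k * (v n : ℝ)^2 - 2 * s * ((u n : ℝ) * v n) := by
        rw [h3]
        linear_combination ((u n : ℝ)^2) * h1 + ((v n : ℝ)^2) * h2
      linarith [e ▸ hsq]
    rw [hu n, hv n]
    push_cast
    calc (1+s)^2 * ((u n : ℝ) * v n)
        = (u n : ℝ) * v n + 2 * s * ((u n : ℝ) * v n) + (h:ℝ) * k * ((u n : ℝ) * v n) := by
          rw [← hs2]; ring
      _ ≤ (u n : ℝ) * v n + ((h:ℝ) * (u n : ℝ)^2 + k * (v n : ℝ)^2)
            + (h:ℝ) * k * ((u n : ℝ) * v n) := by linarith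
      _ = ((u n : ℝ) + k * v n) * ((h:ℝ) * u n + v n) := by ring
  have L5 : ∀ n, (1+s)^(2*n) * h ≤ (u (n+1) : ℝ) * v (n+1) := by
    intro n
    induction n with
    | zero =>
      have e1 : u 1 = 1 := by rw [hu 0, hu0, hv0]; ring
      have e2 : v 1 = h := by rw [hv 0, hu0, hv0]; ring
      rw [e1, e2]; norm_num
    | succ n ih =>
      calc (1+s)^(2*(n+1)) * h = (1+s)^2 * ((1+s)^(2*n) * h) := by ring
        _ ≤ (1+s)^2 * ((u (n+1) : ℝ) * v (n+1)) :=
            mul_le_mul_of_nonneg_left ih (by positivity)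
        _ ≤ _ := L4 (n+1)
  -- lower bound for v^2
  have L6 : ∀ n, (1+s)^(2*n) * h / (k+1) ≤ ((v (n+1) : ℝ)) ^ 2 := by
    intro n
    have h3 : (u (n+1) : ℝ) ≤ (k+1) * v (n+1) := by exact_mod_cast L3 n
    have hvpos : (0:ℝ) ≤ (v (n+1) : ℝ) := Nat.cast_nonneg _
    rw [div_le_iff₀ (by positivity)]
    nlinarith [L5 n, mul_le_mul_of_nonneg_right h3 hvpos]
  set r : ℝ := ((h:ℝ) * k - 1) / (1+s)^2 with hrdef
  have hr0 : 0 ≤ r := div_nonneg (by linarith) (by positivity)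
  have hr1 : r < 1 := by
    rw [hrdef, div_lt_one (by positivity)]
    nlinarith
  set C : ℝ := (k+1) * ((h:ℝ) * k - 1) / h with hCdef
  have key : ∀ n, |((u (n+1) : ℝ) / v (n+1)) ^ 2 - k / h| ≤ C * r ^ n := by
    intro n
    have hvpos : (0:ℝ) < v (n+1) := by
      have := hv1 n; exact_mod_cast Nat.lt_of_lt_of_le Nat.zero_lt_one this
    have hvne : ((v (n+1)) : ℝ) ≠ 0 := ne_of_gt hvpos
    have e1 : ((u (n+1) : ℝ) / v (n+1)) ^ 2 - k / h =
        (1 - (h:ℝ) * k) ^ (n+1) / (v (n+1)) ^ 2 := by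
      have hL := L1 (n+1)
      have hneh : (h:ℝ) ≠ 0 := by positivity
      field_simp
      linear_combination hL
    rw [e1, abs_div, abs_pow, abs_of_nonpos (by linarith : (1 - (h:ℝ)*k) ≤ 0),
      abs_pow, abs_of_pos hvpos, neg_sub]
    have hlow : 0 < (1+s)^(2*n) * h / (k+1) := by positivity
    have hb : ((h:ℝ)*k - 1) ^ (n+1) / (v (n+1) : ℝ) ^ 2 ≤
        ((h:ℝ)*k - 1) ^ (n+1) / ((1+s)^(2*n) * h / (k+1)) := by
      apply div_le_div_of_nonneg_left _ hlow (L6 n)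
      exact pow_nonneg (by linarith) _
    refine hb.trans_eq ?_
    rw [hCdef, hrdef, pow_succ, pow_mul, div_pow]
    have hne1 : ((1:ℝ)+s)^2 ≠ 0 := by positivity
    have hne2 : (((1:ℝ)+s)^2)^n ≠ 0 := pow_ne_zero _ hne1
    have hneh : (h:ℝ) ≠ 0 := by positivity
    field_simp
  have T0 : Tendsto (fun n => C * r ^ n) atTop (nhds 0) := by
    simpa using (tendsto_pow_atTop_nhds_zero_of_lt_one hr0 hr1).const_mul C
  have T1 : Tendsto (fun n => ((u (n+1) : ℝ) / v (n+1)) ^ 2 - (k:ℝ) / h) atTop (nhds 0) :=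
    squeeze_zero_norm (fun n => by simpa [Real.norm_eq_abs] using key n) T0
  have T2 : Tendsto (fun n => ((u (n+1) : ℝ) / v (n+1)) ^ 2) atTop (nhds ((k:ℝ) / h)) := by
    have := T1.add_const ((k:ℝ)/h)
    simpa using this
  have T3 : Tendsto (fun n => ((u n : ℝ) / v n) ^ 2) atTop (nhds ((k:ℝ) / h)) := by
    rw [← tendsto_add_atTop_iff_nat 1]
    exact T2
  have T4 := T3.sqrt
  have hfun : (fun n => (u n : ℝ) / v n) = fun n => Real.sqrt (((u n : ℝ) / v n) ^ 2) := by
    funext n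
    rw [Real.sqrt_sq (div_nonneg (Nat.cast_nonneg _) (Nat.cast_nonneg _))]
  rw [hfun]
  exact T4
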